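/- There exists a constant c > 0 such that for every natural number N ≥ 1, ∫_{[−2^N, 2^N]²} (sin ξ₁)²·(sin ξ₂)²/(ξ₁² + ξ₂²) dξ₁ dξ₂ ≥ c·N. -/

import Mathlib

open MeasureTheory Real

noncomputable def Fint8 : ℝ × ℝ → ℝ :=
  fun p => (Real.sin p.1) ^ 2 * (Real.sin p.2) ^ 2 / (p.1 ^ 2 + p.2 ^ 2)

def Iv8 : ℕ → Set ℝ
  | 0 => Set.Ico (Real.pi / 4) (Real.pi / 2)
  | (k + 1) => Set.Ico ((2 : ℝ) ^ (k + 1)) ((2 : ℝ) ^ (k + 2))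

lemma Iv8_meas (k : ℕ) : MeasurableSet (Iv8 k) := by
  cases k <;> exact measurableSet_Ico

lemma Iv8_pos {k : ℕ} {x : ℝ} (hx : x ∈ Iv8 k) : 0 < x := by
  cases k with
  | zero => exact lt_of_lt_of_le (by positivity) hx.1
  | succ n => exact lt_of_lt_of_le (by positivity) hx.1

lemma Iv8_lt {k : ℕ} {x : ℝ} (hx : x ∈ Iv8 k) : x < (2 : ℝ) ^ (k + 1) := by
  cases k with
  | zero =>
    have := Real.pi_le_four
    calc x < Real.pi / 2 := hx.2
    _ ≤ 2 := by linarith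
    _ = (2 : ℝ) ^ 1 := by norm_num
  | succ n => exact hx.2

lemma Iv8_ge {k : ℕ} {x : ℝ} (hk : 1 ≤ k) (hx : x ∈ Iv8 k) : (2 : ℝ) ^ k ≤ x := by
  cases k with
  | zero => omega
  | succ n => exact hx.1

lemma Iv8_disjoint {j k : ℕ} (h : j < k) : Disjoint (Iv8 j) (Iv8 k) := by
  rw [Set.disjoint_left]
  intro x hxj hxk
  have h1 : x < (2 : ℝ) ^ (j + 1) := Iv8_lt hxj
  have h2 : (2 : ℝ) ^ k ≤ x := Iv8_ge (by omega) hxk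
  have h3 : (2 : ℝ) ^ (j + 1) ≤ (2 : ℝ) ^ k :=
    pow_le_pow_right₀ (by norm_num) (by omega)
  linarith

lemma Fint8_nonneg (p : ℝ × ℝ) : 0 ≤ Fint8 p := by
  unfold Fint8
  positivity

lemma Fint8_le_one (p : ℝ × ℝ) : Fint8 p ≤ 1 := by
  unfold Fint8
  rcases eq_or_lt_of_le (by positivity : (0:ℝ) ≤ p.1 ^ 2 + p.2 ^ 2) with h | h
  · rw [← h, div_zero]; norm_num
  · rw [div_le_one h]
    have h1 : Real.sin p.1 ^ 2 ≤ p.1 ^ 2 := Real.sin_sq_le_sq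
    have h2 : Real.sin p.2 ^ 2 ≤ 1 := Real.sin_sq_le_one _
    nlinarith [sq_nonneg (Real.sin p.1), sq_nonneg (Real.sin p.2), sq_nonneg p.2]

lemma Fint8_meas : Measurable Fint8 := by
  unfold Fint8
  fun_prop

lemma integrableOn_of_bounded8 {f : ℝ × ℝ → ℝ} (hf : Measurable f)
    {C : ℝ} (hC : ∀ p, ‖f p‖ ≤ C) {s : Set (ℝ × ℝ)} (hs : volume s < ⊤) :
    IntegrableOn f s := by
  exact Integrable.mono' (g := fun _ => C) ((integrableOn_const_iff (C := C)).mpr (Or.inr hs))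
    hf.aestronglyMeasurable (Filter.Eventually.of_forall hC)

lemma Iv8_vol_lt (k : ℕ) : volume (Iv8 k ×ˢ Iv8 k) < ⊤ := by
  rw [Measure.volume_eq_prod ℝ ℝ, Measure.prod_prod]
  cases k with
  | zero =>
    simp only [Iv8, Real.volume_Ico]
    exact ENNReal.mul_lt_top ENNReal.ofReal_lt_top ENNReal.ofReal_lt_top
  | succ n =>
    simp only [Iv8, Real.volume_Ico]
    exact ENNReal.mul_lt_top ENNReal.ofReal_lt_top ENNReal.ofReal_lt_top

/-- Lower bound for the integral of `sin^2` over a dyadic block. -/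
lemma sin_sq_integral_ge (a b : ℝ) (hab : a ≤ b) :
    (b - a - 1) / 2 ≤ ∫ x in Set.Ico a b, Real.sin x ^ 2 := by
  rw [setIntegral_congr_set Ico_ae_eq_Ioc, ← intervalIntegral.integral_of_le hab,
    integral_sin_sq]
  have h1 : -(1/2 : ℝ) ≤ Real.sin a * Real.cos a := by
    have := Real.neg_one_le_sin (2 * a)
    have h2a := Real.sin_two_mul a
    linarith
  have h2 : Real.sin b * Real.cos b ≤ 1/2 := by
    have := Real.sin_le_one (2 * b)
    have h2b := Real.sin_two_mul b
    linarith
  linarith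

lemma block_bound (k : ℕ) : 1 / 128 ≤ ∫ p in Iv8 k ×ˢ Iv8 k, Fint8 p := by
  cases k with
  | zero =>
    -- on [π/4, π/2)², the integrand is at least 1/32
    have hpi4 : (0:ℝ) < Real.pi / 4 := by positivity
    have hpile : Real.pi ≤ 4 := Real.pi_le_four
    have hpige : (3:ℝ) ≤ Real.pi := by
      have := Real.pi_gt_three; linarith
    have hptw : ∀ x ∈ Set.Ico (Real.pi / 4) (Real.pi / 2), (1/2 : ℝ) ≤ Real.sin x ^ 2 := by
      intro x hx
      have hx1 : Real.pi / 4 ≤ x := hx.1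
      have hx2 : x ≤ Real.pi / 2 := le_of_lt hx.2
      have hsin : Real.sin (Real.pi / 4) ≤ Real.sin x := by
        apply Real.strictMonoOn_sin.monotoneOn
        · constructor <;> [linarith; linarith]
        · constructor <;> [linarith; linarith]
        · exact hx1
      rw [Real.sin_pi_div_four] at hsin
      have h0 : (0:ℝ) ≤ Real.sqrt 2 / 2 := by positivity
      have hs2 : (Real.sqrt 2 / 2) ^ 2 = 1 / 2 := by
        rw [div_pow, Real.sq_sqrt (by norm_num : (0:ℝ) ≤ 2)]; norm_num
      nlinarith
    have hF : ∀ p ∈ Iv8 0 ×ˢ Iv8 0, (1/32 : ℝ) ≤ Fint8 p := by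
      rintro p ⟨hp1, hp2⟩
      have h1 := hptw _ hp1
      have h2 := hptw _ hp2
      have hd0 : 0 < p.1 ^ 2 + p.2 ^ 2 := by
        have := Iv8_pos (k := 0) hp1
        positivity
      have hdle : p.1 ^ 2 + p.2 ^ 2 ≤ 8 := by
        have hb1 : p.1 < Real.pi / 2 := hp1.2
        have hb2 : p.2 < Real.pi / 2 := hp2.2
        have ha1 : 0 < p.1 := Iv8_pos (k := 0) hp1
        have ha2 : 0 < p.2 := Iv8_pos (k := 0) hp2
        nlinarith
      unfold Fint8
      rw [le_div_iff₀ hd0]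
      nlinarith [sq_nonneg (Real.sin p.1), sq_nonneg (Real.sin p.2)]
    have hvol : (volume (Iv8 0 ×ˢ Iv8 0)).toReal = (Real.pi / 4) ^ 2 := by
      rw [Measure.volume_eq_prod ℝ ℝ, Measure.prod_prod]
      simp only [Iv8, Real.volume_Ico]
      rw [ENNReal.toReal_mul, ENNReal.toReal_ofReal (by linarith)]
      have : Real.pi / 2 - Real.pi / 4 = Real.pi / 4 := by ring
      rw [this]; ring
    have hint : IntegrableOn Fint8 (Iv8 0 ×ˢ Iv8 0) :=
      integrableOn_of_bounded8 Fint8_meas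
        (fun p => by rw [Real.norm_eq_abs, abs_of_nonneg (Fint8_nonneg p)]; exact Fint8_le_one p)
        (Iv8_vol_lt 0)
    have := setIntegral_ge_of_const_le_real ((Iv8_meas 0).prod (Iv8_meas 0))
      (Iv8_vol_lt 0).ne hF hint
    change _ * (volume (Iv8 0 ×ˢ Iv8 0)).toReal ≤ _ at this
    rw [hvol] at this
    have hge : (3/4 : ℝ) ≤ Real.pi / 4 := by linarith
    nlinarith [this]
  | succ n =>
    set a : ℝ := (2 : ℝ) ^ (n + 1) with ha
    set b : ℝ := (2 : ℝ) ^ (n + 2) with hb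
    have hba : b = 2 * a := by rw [ha, hb]; ring
    have ha1 : (2:ℝ) ≤ a := by
      rw [ha]
      calc (2:ℝ) = 2 ^ 1 := by norm_num
      _ ≤ 2 ^ (n + 1) := pow_le_pow_right₀ (by norm_num) (by omega)
    have ha0 : 0 < a := by linarith
    set D : ℝ := 2 * b ^ 2 with hD
    have hD0 : 0 < D := by rw [hD, hba]; positivity
    -- pointwise bound
    have hptw : ∀ p ∈ Iv8 (n+1) ×ˢ Iv8 (n+1),
        Real.sin p.1 ^ 2 * (Real.sin p.2 ^ 2 / D) ≤ Fint8 p := by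
      rintro p ⟨hp1, hp2⟩
      have h1a : a ≤ p.1 := hp1.1
      have h1b : p.1 < b := hp1.2
      have h2a : a ≤ p.2 := hp2.1
      have h2b : p.2 < b := hp2.2
      have hd0 : 0 < p.1 ^ 2 + p.2 ^ 2 := by nlinarith
      have hdle : p.1 ^ 2 + p.2 ^ 2 ≤ D := by rw [hD]; nlinarith
      unfold Fint8
      rw [mul_div_assoc']
      exact div_le_div_of_nonneg_left (by positivity) hd0 hdle
    -- integrability
    have hintF : IntegrableOn Fint8 (Iv8 (n+1) ×ˢ Iv8 (n+1)) :=
      integrableOn_of_bounded8 Fint8_meas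
        (fun p => by rw [Real.norm_eq_abs, abs_of_nonneg (Fint8_nonneg p)]; exact Fint8_le_one p)
        (Iv8_vol_lt (n+1))
    have hintg : IntegrableOn (fun p : ℝ × ℝ => Real.sin p.1 ^ 2 * (Real.sin p.2 ^ 2 / D))
        (Iv8 (n+1) ×ˢ Iv8 (n+1)) := by
      apply integrableOn_of_bounded8 (by fun_prop) (C := 1 / D)
      · intro p
        rw [Real.norm_eq_abs, abs_of_nonneg (by positivity)]
        have h1 : Real.sin p.1 ^ 2 ≤ 1 := Real.sin_sq_le_one _
        have h2 : Real.sin p.2 ^ 2 ≤ 1 := Real.sin_sq_le_one _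
        have h3 : Real.sin p.2 ^ 2 / D ≤ 1 / D := (div_le_div_iff_of_pos_right hD0).mpr h2
        nlinarith [sq_nonneg (Real.sin p.1), sq_nonneg (Real.sin p.2),
          div_nonneg (sq_nonneg (Real.sin p.2)) hD0.le]
      · exact Iv8_vol_lt (n+1)
    have hmono := setIntegral_mono_on hintg hintF ((Iv8_meas (n+1)).prod (Iv8_meas (n+1))) hptw
    -- compute product integral
    have hprod : ∫ p in Iv8 (n+1) ×ˢ Iv8 (n+1),
        Real.sin p.1 ^ 2 * (Real.sin p.2 ^ 2 / D)
        = (∫ x in Iv8 (n+1), Real.sin x ^ 2) * ((∫ x in Iv8 (n+1), Real.sin x ^ 2) / D) := by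
      rw [Measure.volume_eq_prod ℝ ℝ]
      rw [setIntegral_prod_mul (fun x => Real.sin x ^ 2) (fun y => Real.sin y ^ 2 / D)]
      rw [integral_div]
    set L : ℝ := ∫ x in Iv8 (n+1), Real.sin x ^ 2 with hL
    have hLge : (b - a - 1) / 2 ≤ L := by
      have : Iv8 (n+1) = Set.Ico a b := rfl
      rw [hL, this]
      exact sin_sq_integral_ge a b (by nlinarith)
    have hLm : a / 4 ≤ L := by
      rw [hba] at hLge; linarith
    have hfinal : 1 / 128 ≤ L * (L / D) := by
      rw [mul_div_assoc', le_div_iff₀ hD0, hD, hba]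
      nlinarith [hLm, ha1]
    calc (1/128 : ℝ) ≤ L * (L / D) := hfinal
    _ = ∫ p in Iv8 (n+1) ×ˢ Iv8 (n+1), Real.sin p.1 ^ 2 * (Real.sin p.2 ^ 2 / D) := hprod.symm
    _ ≤ _ := hmono

theorem stmt_8 : ∃ c : ℝ, 0 < c ∧
    ∀ N : ℕ, 1 ≤ N →
      c * (N : ℝ) ≤
        ∫ p in (Set.Icc (-(2 : ℝ) ^ N) ((2 : ℝ) ^ N)) ×ˢ (Set.Icc (-(2 : ℝ) ^ N) ((2 : ℝ) ^ N)),
          (Real.sin p.1) ^ 2 * (Real.sin p.2) ^ 2 / (p.1 ^ 2 + p.2 ^ 2) := by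
  refine ⟨1/128, by norm_num, fun N hN => ?_⟩
  set S : Set (ℝ × ℝ) :=
    (Set.Icc (-(2 : ℝ) ^ N) ((2 : ℝ) ^ N)) ×ˢ (Set.Icc (-(2 : ℝ) ^ N) ((2 : ℝ) ^ N)) with hS
  have hSvol : volume S < ⊤ := by
    rw [hS, Measure.volume_eq_prod ℝ ℝ, Measure.prod_prod, Real.volume_Icc]
    exact ENNReal.mul_lt_top ENNReal.ofReal_lt_top ENNReal.ofReal_lt_top
  have hintS : IntegrableOn Fint8 S :=
    integrableOn_of_bounded8 Fint8_meas
      (fun p => by rw [Real.norm_eq_abs, abs_of_nonneg (Fint8_nonneg p)]; exact Fint8_le_one p)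
      hSvol
  have hIvsub : ∀ k < N, Iv8 k ×ˢ Iv8 k ⊆ S := by
    intro k hk
    rintro p ⟨hp1, hp2⟩
    have hsub : ∀ x : ℝ, x ∈ Iv8 k → x ∈ Set.Icc (-(2 : ℝ) ^ N) ((2 : ℝ) ^ N) := by
      intro x hx
      constructor
      · have h0 : 0 < x := Iv8_pos hx
        have : (0:ℝ) ≤ (2:ℝ) ^ N := by positivity
        linarith
      · have h1 : x < (2:ℝ) ^ (k + 1) := Iv8_lt hx
        have h2 : (2:ℝ) ^ (k + 1) ≤ (2:ℝ) ^ N :=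
          pow_le_pow_right₀ (by norm_num) (by omega)
        linarith
    exact ⟨hsub _ hp1, hsub _ hp2⟩
  set U : Set (ℝ × ℝ) := ⋃ k ∈ Finset.range N, Iv8 k ×ˢ Iv8 k with hU
  have hUsub : U ⊆ S := by
    rw [hU]
    refine Set.iUnion₂_subset fun k hk => hIvsub k (Finset.mem_range.mp hk)
  have hsum : ∫ p in U, Fint8 p = ∑ k ∈ Finset.range N, ∫ p in Iv8 k ×ˢ Iv8 k, Fint8 p := by
    apply integral_biUnion_finset
    · exact fun k _ => (Iv8_meas k).prod (Iv8_meas k)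
    · intro j _ k _ hjk
      have key : ∀ {a b : ℕ}, a < b → Disjoint (Iv8 a ×ˢ Iv8 a) (Iv8 b ×ˢ Iv8 b) := by
        intro a b h
        rw [Set.disjoint_left]
        rintro p ⟨h1, _⟩ ⟨h2, _⟩
        exact Set.disjoint_left.mp (Iv8_disjoint h) h1 h2
      rcases lt_or_gt_of_ne hjk with h | h
      · exact key h
      · exact (key h).symm
    · exact fun k _ => hintS.mono_set (hIvsub k (Finset.mem_range.mp ‹k ∈ Finset.range N›))
  have hmono : ∫ p in U, Fint8 p ≤ ∫ p in S, Fint8 p :=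
    setIntegral_mono_set hintS (Filter.Eventually.of_forall Fint8_nonneg)
      (HasSubset.Subset.eventuallyLE hUsub)
  have hsumge : (1/128 : ℝ) * N ≤ ∑ k ∈ Finset.range N, ∫ p in Iv8 k ×ˢ Iv8 k, Fint8 p := by
    calc (1/128 : ℝ) * N = ∑ _k ∈ Finset.range N, (1/128 : ℝ) := by
          rw [Finset.sum_const, Finset.card_range, nsmul_eq_mul]; ring
    _ ≤ _ := Finset.sum_le_sum fun k _ => block_bound k
  have : (1/128 : ℝ) * N ≤ ∫ p in S, Fint8 p := by
    rw [← hsum] at hsumge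
    linarith
  exact this
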